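/- If A is a stratifiable approximation on L² over a well-founded index set, then its partial stable operator C_A is also stratifiable. -/

import Mathlib

/-- Least fixpoint as the infimum of the prefixpoints (Knaster–Tarski). -/
def lfpSet {α : Type*} [CompleteLattice α] (f : α → α) : α := sInf {a | f a ≤ a}

theorem lfpSet_le {α : Type*} [CompleteLattice α] {f : α → α} {a : α} (h : f a ≤ a) :
    lfpSet f ≤ a := sInf_le h

theorem lfpSet_map_le {α : Type*} [CompleteLattice α] {f : α → α} (hf : Monotone f) :
    f (lfpSet f) ≤ lfpSet f :=
  le_sInf fun a ha => le_trans (hf (sInf_le ha)) ha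

theorem lfpSet_fixed {α : Type*} [CompleteLattice α] {f : α → α} (hf : Monotone f) :
    f (lfpSet f) = lfpSet f :=
  le_antisymm (lfpSet_map_le hf) (sInf_le (hf (lfpSet_map_le hf)))

open Classical in
/-- The lfp of a monotone, `≤ i`-stratified operator agrees on components `≤ i`
with the lfp of its truncation to components `≤ i`. -/
theorem lfp_trunc {I : Type*} [Preorder I] {L : I → Type*} [∀ i, CompleteLattice (L i)]
    (f : (∀ i, L i) → (∀ i, L i)) (hf : Monotone f) (i : I)
    (hself : ∀ a a' : ∀ i, L i, (∀ j, j ≤ i → a j = a' j) → ∀ j, j ≤ i → f a j = f a' j) :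
    ∀ j, j ≤ i → lfpSet f j = lfpSet (fun a k => if k ≤ i then f a k else ⊥) j := by
  set F : (∀ i, L i) → (∀ i, L i) := fun a k => if k ≤ i then f a k else ⊥ with hF
  have hFmono : Monotone F := by
    intro a b hab k
    by_cases h : k ≤ i
    · simpa [hF, h] using hf hab k
    · simp [hF, h]
  set p := lfpSet f with hp
  set P := lfpSet F with hP
  have hpfix : f p ≤ p := lfpSet_map_le hf
  have hPfix : F P = P := lfpSet_fixed hFmono
  -- P ≤ p
  have hPp : P ≤ p := by
    apply lfpSet_le
    intro k
    by_cases h : k ≤ i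
    · simpa [hF, h] using hpfix k
    · simp [hF, h]
  -- m: patch p with P on components ≤ i
  set m : ∀ i, L i := fun k => if k ≤ i then P k else p k with hm
  have hmp : m ≤ p := by
    intro k
    by_cases h : k ≤ i
    · simpa [hm, h] using hPp k
    · simp [hm, h]
  have hpm : p ≤ m := by
    apply lfpSet_le
    intro k
    by_cases h : k ≤ i
    · have h1 : f m k = f P k := hself m P (fun j hj => by simp [hm, hj]) k h
      have h2 : f P k = P k := by
        have := congrFun hPfix k
        simpa [hF, h] using this
      rw [h1, h2]; simp [hm, h]
    · have : f m k ≤ f p k := hf hmp k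
      simpa [hm, h] using this.trans (hpfix k)
  intro j hj
  have h1 : p j ≤ P j := by simpa [hm, hj] using hpm j
  exact le_antisymm h1 (hPp j)

open Classical in
/-- Key lemma: lfps of `≤ i`-equivalent monotone operators agree on components `≤ i`. -/
theorem lfp_strat {I : Type*} [Preorder I] {L : I → Type*} [∀ i, CompleteLattice (L i)]
    (f g : (∀ i, L i) → (∀ i, L i)) (hf : Monotone f) (hg : Monotone g) (i : I)
    (hfg : ∀ a a' : ∀ i, L i, (∀ j, j ≤ i → a j = a' j) → ∀ j, j ≤ i → f a j = g a' j) :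
    ∀ j, j ≤ i → lfpSet f j = lfpSet g j := by
  have hfself : ∀ a a' : ∀ i, L i, (∀ j, j ≤ i → a j = a' j) → ∀ j, j ≤ i → f a j = f a' j := by
    intro a a' h j hj
    rw [hfg a a' h j hj, hfg a' a' (fun _ _ => rfl) j hj]
  have hgself : ∀ a a' : ∀ i, L i, (∀ j, j ≤ i → a j = a' j) → ∀ j, j ≤ i → g a j = g a' j := by
    intro a a' h j hj
    rw [← hfg a a (fun _ _ => rfl) j hj, hfg a a' h j hj]
  have hFG : (fun a k => if k ≤ i then f a k else (⊥ : L k)) =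
      (fun a k => if k ≤ i then g a k else ⊥) := by
    funext a k
    by_cases h : k ≤ i
    · simp [h, hfg a a (fun _ _ => rfl) k h]
    · simp [h]
  intro j hj
  rw [lfp_trunc f hf i hfself j hj, lfp_trunc g hg i hgself j hj, hFG]

/-- If A is a stratifiable approximation on L² over a well-founded index set,
then the partial stable operator C_A(x,y) = (lfp A¹(·,y), lfp A²(x,·)) is also
stratifiable. -/
theorem partial_stable_operator_stratifiable
    {I : Type*} [PartialOrder I] [WellFoundedLT I]
    {L : I → Type*} [∀ i, CompleteLattice (L i)]
    (A : ((∀ i, L i) × (∀ i, L i)) → ((∀ i, L i) × (∀ i, L i)))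
    (hmono : ∀ p q : (∀ i, L i) × (∀ i, L i), p.1 ≤ q.1 → q.2 ≤ p.2 →
        (A p).1 ≤ (A q).1 ∧ (A q).2 ≤ (A p).2)
    (hstrat : ∀ x y x' y' : ∀ i, L i, ∀ i : I,
        (∀ j, j ≤ i → x j = x' j ∧ y j = y' j) →
        ∀ j, j ≤ i → (A (x, y)).1 j = (A (x', y')).1 j ∧
          (A (x, y)).2 j = (A (x', y')).2 j) :
    ∀ x y x' y' : ∀ i, L i, ∀ i : I,
      (∀ j, j ≤ i → x j = x' j ∧ y j = y' j) →
      ∀ j, j ≤ i →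
        lfpSet (fun a => (A (a, y)).1) j = lfpSet (fun a => (A (a, y')).1) j ∧
        lfpSet (fun b => (A (x, b)).2) j = lfpSet (fun b => (A (x', b)).2) j := by
  intro x y x' y' i hxy j hj
  constructor
  · refine lfp_strat _ _ ?_ ?_ i ?_ j hj
    · intro a a' haa'
      exact (hmono (a, y) (a', y) haa' le_rfl).1
    · intro a a' haa'
      exact (hmono (a, y') (a', y') haa' le_rfl).1
    · intro a a' haa' k hk
      exact (hstrat a y a' y' i (fun l hl => ⟨haa' l hl, (hxy l hl).2⟩) k hk).1
  · refine lfp_strat _ _ ?_ ?_ i ?_ j hj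
    · intro b b' hbb'
      exact (hmono (x, b') (x, b) le_rfl hbb').2
    · intro b b' hbb'
      exact (hmono (x', b') (x', b) le_rfl hbb').2
    · intro b b' hbb' k hk
      exact (hstrat x b x' b' i (fun l hl => ⟨(hxy l hl).1, hbb' l hl⟩) k hk).2
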